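/- Let R → S be a faithfully flat homomorphism of Noetherian rings of prime characteristic p > 0 and I an ideal of R. Then I^F S ⊆ (IS)^F, and if (IS)^{F,[p^e]} = (IS)^{[p^e]} in S then (I^F)^{[p^e]} ⊆ I^{[p^e]} in R; in particular Fte(I) ≤ Fte(IS). -/
import Mathlib


open Ideal

/-- The `q`-th Frobenius power of an ideal: the ideal generated by `q`-th powers of its elements. -/
def frobPow {R : Type*} [CommRing R] (I : Ideal R) (q : ℕ) : Ideal R :=
  Ideal.span ((· ^ q) '' (I : Set R))

/-- The Frobenius closure of an ideal, as a set. -/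
def frobClosure {R : Type*} [CommRing R] (I : Ideal R) (p : ℕ) : Set R :=
  {x | ∃ e : ℕ, x ^ p ^ e ∈ frobPow I (p ^ e)}

section Aux

variable {R S : Type*} [CommRing R] [CommRing S]

lemma frobPow_eq_map (p : ℕ) [ExpChar R p] (I : Ideal R) (e : ℕ) :
    frobPow I (p ^ e) = I.map (iterateFrobenius R p e) := by
  unfold frobPow Ideal.map
  congr 1

lemma frobPow_span (p : ℕ) [ExpChar R p] (T : Set R) (e : ℕ) :
    frobPow (Ideal.span T) (p ^ e) = Ideal.span ((· ^ p ^ e) '' T) := by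
  rw [frobPow_eq_map p _ e, Ideal.map_span]
  congr 1

lemma map_frobPow (p : ℕ) [ExpChar R p] [ExpChar S p] (φ : R →+* S) (I : Ideal R) (e : ℕ) :
    (frobPow I (p ^ e)).map φ = frobPow (I.map φ) (p ^ e) := by
  rw [frobPow_eq_map p I e, frobPow_eq_map p (I.map φ) e, Ideal.map_map, Ideal.map_map]
  congr 1
  ext x
  simp [iterateFrobenius_def, map_pow]

lemma pow_mem_frobPow (p : ℕ) [ExpChar R p] {I : Ideal R} {x : R} (hx : x ∈ I) (e : ℕ) :
    x ^ p ^ e ∈ frobPow I (p ^ e) :=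
  Ideal.subset_span ⟨x, hx, rfl⟩

variable [Algebra R S] [Module.FaithfullyFlat R S]

open TensorProduct in
lemma tmul_one_eq_zero_imp {M : Type*} [AddCommGroup M] [Module R M] (m : M)
    (h : m ⊗ₜ[R] (1 : S) = 0) : m = 0 := by
  have key : ∀ s : S, m ⊗ₜ[R] s = 0 := fun s => by
    have := congrArg (LinearMap.lTensor M (LinearMap.mulLeft R s)) h
    simpa using this
  have hf : (LinearMap.toSpanSingleton R M m).rTensor S = 0 := by
    apply TensorProduct.ext'
    intro r s
    simp only [LinearMap.rTensor_tmul, LinearMap.toSpanSingleton_apply, LinearMap.zero_apply]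
    rw [TensorProduct.smul_tmul, key]
  have h0 := (Module.FaithfullyFlat.zero_iff_rTensor_zero R S
      (LinearMap.toSpanSingleton R M m)).mpr hf
  simpa using congr($h0 1)

lemma mem_of_algebraMap_mem_map {J : Ideal R} {x : R}
    (hx : algebraMap R S x ∈ J.map (algebraMap R S)) : x ∈ J := by
  have h1 : (Ideal.Quotient.mk J x) ⊗ₜ[R] (1 : S) = 0 := by
    apply (TensorProduct.quotTensorEquivQuotSMul S J).injective
    rw [map_zero, TensorProduct.quotTensorEquivQuotSMul_mk_tmul,
      Submodule.Quotient.mk_eq_zero, Ideal.smul_top_eq_map]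
    simpa [Algebra.smul_def] using hx
  have := tmul_one_eq_zero_imp (S := S) _ h1
  rwa [Ideal.Quotient.eq_zero_iff_mem] at this

end Aux

theorem fte_descends_faithfully_flat {R S : Type*} [CommRing R] [CommRing S]
    [IsNoetherianRing R] [IsNoetherianRing S] [Algebra R S] [Module.FaithfullyFlat R S]
    (p : ℕ) [Fact p.Prime] [CharP R p] [CharP S p] (I : Ideal R) :
    (∀ a ∈ frobClosure I p,
        algebraMap R S a ∈ frobClosure (I.map (algebraMap R S)) p) ∧
      ∀ e : ℕ,
        frobPow (Ideal.span (frobClosure (I.map (algebraMap R S)) p)) (p ^ e) =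
            frobPow (I.map (algebraMap R S)) (p ^ e) →
          frobPow (Ideal.span (frobClosure I p)) (p ^ e) ≤ frobPow I (p ^ e) := by
  haveI : ExpChar R p := .prime Fact.out
  haveI : ExpChar S p := .prime Fact.out
  set φ := algebraMap R S
  have part1 : ∀ a ∈ frobClosure I p, φ a ∈ frobClosure (I.map φ) p := by
    rintro a ⟨e, he⟩
    refine ⟨e, ?_⟩
    rw [← map_pow]
    rw [← map_frobPow p φ I e]
    exact Ideal.mem_map_of_mem φ he
  refine ⟨part1, fun e hS => ?_⟩
  rw [frobPow_span p _ e, Ideal.span_le]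
  rintro _ ⟨x, hx, rfl⟩
  have h1 : φ x ∈ Ideal.span (frobClosure (I.map φ) p) :=
    Ideal.subset_span (part1 x hx)
  have h2 : (φ x) ^ p ^ e ∈ frobPow (I.map φ) (p ^ e) := by
    rw [← hS]
    exact pow_mem_frobPow p h1 e
  have h3 : φ (x ^ p ^ e) ∈ (frobPow I (p ^ e)).map φ := by
    rw [map_frobPow p φ I e, map_pow]
    exact h2
  exact mem_of_algebraMap_mem_map h3
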